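/- Let k ≥ 1, let A ∈ ℝ^k and let B be a tuple of positive real numbers. Let a(n) be complex numbers indexed by n ∈ ℤ^k, supported on the box (A, A+B] = {n : A_i < n_i ≤ A_i + B_i for all i}. Let I = (C, C+D] be any product of intervals with I ⊆ (A, A+B]. Then |Σ_{n ∈ I ∩ ℤ^k} a(n)| ≤ C_k (∏_{i=1}^k log(B_i + 2)) · sup_{θ ∈ ℝ^k} |Σ_{n ∈ (A,A+B] ∩ ℤ^k} a(n) e(θ·n)|, where e(t) = e^{2πi t}, θ·n = θ_1 n_1 + ⋯ + θ_k n_k, and C_k is a constant depending only on k. -/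

import Mathlib

open scoped BigOperators

/-- `e(t) = e^{2πit}`. -/
noncomputable def e (t : ℝ) : ℂ := Complex.exp (2 * Real.pi * Complex.I * t)

lemma e_add (x y : ℝ) : e (x + y) = e x * e y := by
  simp [e, ← Complex.exp_add]; ring_nf

lemma e_int (n : ℤ) : e n = 1 := by
  rw [e, Complex.exp_eq_one_iff]
  exact ⟨n, by push_cast; ring⟩

lemma e_int_mul (m : ℤ) (x : ℝ) : e (m * x) = (e x) ^ m := by
  rw [e, e, ← Complex.exp_int_mul]
  congr 1; push_cast; ring

lemma e_nat_mul (m : ℕ) (x : ℝ) : e (m * x) = (e x) ^ m := by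
  simpa using e_int_mul m x

lemma abs_e (x : ℝ) : ‖e x‖ = 1 := by
  rw [e]
  rw [show (2 * Real.pi * Complex.I * x : ℂ) = (2 * Real.pi * x : ℝ) * Complex.I by push_cast; ring]
  exact Complex.norm_exp_ofReal_mul_I _

lemma e_ne_one {x : ℝ} (hx : ∀ n : ℤ, x ≠ n) : e x ≠ 1 := by
  rw [e, Ne, Complex.exp_eq_one_iff]
  rintro ⟨n, hn⟩
  apply hx n
  have h2 : (2 * (Real.pi:ℂ) * Complex.I) ≠ 0 := by
    refine mul_ne_zero (mul_ne_zero two_ne_zero ?_) Complex.I_ne_zero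
    exact_mod_cast Real.pi_ne_zero
  have hx' : (x : ℂ) * (2 * (Real.pi:ℂ) * Complex.I) = (n:ℂ) * (2 * (Real.pi:ℂ) * Complex.I) := by
    rw [← hn]; ring
  have := mul_right_cancel₀ h2 hx'
  exact_mod_cast this

lemma geom_ortho (N : ℕ) (hN : 0 < N) (t : ℤ) :
    ∑ j ∈ Finset.range N, e (j * ((t : ℝ) / N)) = if (N:ℤ) ∣ t then (N:ℂ) else 0 := by
  have hcalc : ∀ j : ℕ, e (j * ((t : ℝ) / N)) = (e ((t:ℝ)/N)) ^ j := fun j => e_nat_mul j _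
  by_cases hdvd : (N:ℤ) ∣ t
  · obtain ⟨s, rfl⟩ := hdvd
    have : ((N * s : ℤ) : ℝ) / N = (s : ℝ) := by
      push_cast; field_simp
    rw [if_pos ⟨s, rfl⟩]
    have : ∀ j ∈ Finset.range N, e (j * (((N*s : ℤ) : ℝ) / N)) = 1 := by
      intro j _
      rw [this, show (j:ℝ) * (s:ℝ) = ((j * s : ℤ) : ℝ) by push_cast; ring, e_int]
    rw [Finset.sum_congr rfl this]
    simp
  · rw [if_neg hdvd]
    have hne : e ((t:ℝ)/N) ≠ 1 := by
      apply e_ne_one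
      intro m hm
      apply hdvd
      refine ⟨m, ?_⟩
      have : (t : ℝ) = N * m := by
        field_simp at hm
        linarith [hm]
      exact_mod_cast this
    simp only [hcalc]
    rw [geom_sum_eq hne]
    have : (e ((t:ℝ)/N)) ^ N = 1 := by
      rw [← e_nat_mul]
      have : (N:ℝ) * ((t:ℝ)/N) = ((t:ℤ):ℝ) := by field_simp
      rw [this, e_int]
    rw [this]
    simp

lemma abs_e_sub_one (x : ℝ) : ‖e x - 1‖ = 2 * |Real.sin (Real.pi * x)| := by
  have h1 : e x = Complex.exp (((2 * Real.pi * x : ℝ)) * Complex.I) := by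
    rw [e]; congr 1; push_cast; ring
  rw [h1, Complex.exp_mul_I]
  rw [← Complex.ofReal_cos, ← Complex.ofReal_sin]
  have : (Real.cos (2*Real.pi*x) : ℂ) + (Real.sin (2*Real.pi*x):ℂ) * Complex.I - 1
      = ((Real.cos (2*Real.pi*x) - 1 : ℝ) : ℂ) + ((Real.sin (2*Real.pi*x) : ℝ)) * Complex.I := by
    push_cast; ring
  rw [this, Complex.norm_def, Complex.normSq_add_mul_I]
  have hs : Real.sin (Real.pi * x) ^ 2 = (1 - Real.cos (2 * Real.pi * x)) / 2 := by
    rw [Real.sin_sq_eq_half_sub]; ring_nf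
  have : (Real.cos (2*Real.pi*x) - 1)^2 + Real.sin (2*Real.pi*x)^2
      = (2 * |Real.sin (Real.pi * x)|)^2 := by
    have hpyth := Real.sin_sq_add_cos_sq (2*Real.pi*x)
    have habs : |Real.sin (Real.pi * x)|^2 = Real.sin (Real.pi*x)^2 := sq_abs _
    nlinarith [hs]
  rw [this, Real.sqrt_sq (by positivity)]

lemma sin_lower (N j : ℕ) (h1 : 1 ≤ j) (h2 : j < N) :
    2 * min (j:ℝ) ((N:ℝ)-j) / N ≤ Real.sin (Real.pi * j / N) := by
  have hN0 : 0 < N := by omega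
  have hN : (0:ℝ) < N := by exact_mod_cast hN0
  have hj0 : (0:ℝ) < j := by exact_mod_cast h1
  have hjN : (j:ℝ) < N := by exact_mod_cast h2
  rcases le_or_gt (j:ℝ) ((N:ℝ) - j) with h | h
  · rw [min_eq_left h]
    have hx : Real.pi * j / N ≤ Real.pi / 2 := by
      rw [div_le_div_iff₀ hN two_pos]
      nlinarith [Real.pi_pos]
    have := Real.mul_le_sin (x := Real.pi * j / N) (by positivity) hx
    calc 2 * (j:ℝ) / N = 2 / Real.pi * (Real.pi * j / N) := by
          field_simp
      _ ≤ _ := this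
  · rw [min_eq_right h.le]
    have hsym : Real.sin (Real.pi * j / N) = Real.sin (Real.pi * ((N:ℝ)-j) / N) := by
      rw [show Real.pi * ((N:ℝ)-j)/N = Real.pi - Real.pi * j / N by field_simp,
        Real.sin_pi_sub]
    rw [hsym]
    have hx : Real.pi * ((N:ℝ)-j) / N ≤ Real.pi / 2 := by
      rw [div_le_div_iff₀ hN two_pos]
      nlinarith [Real.pi_pos]
    have := Real.mul_le_sin (x := Real.pi * ((N:ℝ)-j) / N)
      (div_nonneg (by nlinarith [Real.pi_pos]) hN.le) hx
    calc 2 * ((N:ℝ)-j) / N = 2 / Real.pi * (Real.pi * ((N:ℝ)-j) / N) := by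
          field_simp
      _ ≤ _ := this

lemma g_bound (N j : ℕ) (h1 : 1 ≤ j) (h2 : j < N) (p q : ℤ) :
    ‖∑ m ∈ Finset.Ioc p q, e (-((j:ℝ) * m) / N)‖ ≤
      (N:ℝ)/(2*j) + (N:ℝ)/(2*((N:ℝ)-j)) := by
  have hN0 : 0 < N := by omega
  have hN : (0:ℝ) < N := by exact_mod_cast hN0
  have hj0 : (0:ℝ) < j := by exact_mod_cast h1
  have hjN : (j:ℝ) < N := by exact_mod_cast h2
  set z : ℂ := e (-(j:ℝ)/N) with hz
  have hterm : ∀ m : ℤ, e (-((j:ℝ) * m) / N) = z ^ m := by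
    intro m
    rw [hz, ← e_int_mul]
    congr 1; push_cast; ring
  have hzne : z ≠ 1 := by
    apply e_ne_one
    intro n hn
    have : -(j:ℝ) = N * n := by field_simp at hn; linarith
    have hn' : -(j:ℤ) = N * n := by exact_mod_cast this
    rcases le_or_gt 0 n with h | h
    · nlinarith [h1, h2, hn']
    · have : n ≤ -1 := by omega
      nlinarith [hn']
  have habsz : ‖z‖ = 1 := abs_e _
  -- |z - 1| lower bound
  have hlow : 2 * (2 * min (j:ℝ) ((N:ℝ)-j) / N) ≤ ‖z - 1‖ := by
    rw [hz, abs_e_sub_one]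
    have : Real.sin (Real.pi * (-(j:ℝ)/N)) = -Real.sin (Real.pi * j / N) := by
      rw [show Real.pi * (-(j:ℝ)/N) = -(Real.pi * j / N) by ring, Real.sin_neg]
    rw [this, abs_neg]
    have h0 : 0 ≤ Real.sin (Real.pi * j / N) :=
      le_trans (le_of_lt (div_pos (mul_pos two_pos (lt_min hj0 (by linarith))) hN))
        (sin_lower N j h1 h2)
    rw [abs_of_nonneg h0]
    nlinarith [sin_lower N j h1 h2]
  have hminpos : 0 < min (j:ℝ) ((N:ℝ)-j) := lt_min hj0 (by linarith)
  have hlowpos : (0:ℝ) < 2 * (2 * min (j:ℝ) ((N:ℝ)-j) / N) :=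
    mul_pos two_pos (div_pos (mul_pos two_pos hminpos) hN)
  have habs1 : 0 < ‖z - 1‖ := lt_of_lt_of_le hlowpos hlow
  -- geometric sum
  have hsum : ‖∑ m ∈ Finset.Ioc p q, z ^ m‖ ≤ 2 / ‖z - 1‖ := by
    rcases le_or_gt q p with h | h
    · rw [Finset.Ioc_eq_empty (not_lt.mpr h)]
      simp only [Finset.sum_empty, norm_zero]
      exact le_of_lt (div_pos two_pos habs1)
    · have hre : ∑ m ∈ Finset.Ioc p q, z ^ m
          = z^(p+1) * ∑ l ∈ Finset.range (q - p).toNat, z ^ l := by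
        rw [Finset.mul_sum]
        rw [show Finset.Ioc p q = Finset.map ⟨fun l : ℕ => p + 1 + l, by intro a b hab; simp only [] at hab; omega⟩
          (Finset.range (q - p).toNat) from ?_]
        · rw [Finset.sum_map]
          apply Finset.sum_congr rfl
          intro l _
          show z ^ (p + 1 + (l:ℤ)) = z ^ (p + 1) * z ^ l
          rw [← zpow_natCast z l, ← zpow_add₀ (by rw [← norm_ne_zero_iff, habsz]; norm_num)]
        · ext m
          simp only [Finset.mem_Ioc, Finset.mem_map, Finset.mem_range,
            Function.Embedding.coeFn_mk]
          constructor
          · intro hm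
            refine ⟨(m - p - 1).toNat, ?_, show p + 1 + ((m - p - 1).toNat : ℤ) = m from ?_⟩ <;> omega
          · rintro ⟨l, hl, rfl⟩
            show p < p + 1 + (l:ℤ) ∧ p + 1 + (l:ℤ) ≤ q
            omega
      rw [hre, norm_mul, norm_zpow, habsz, one_zpow, one_mul]
      rw [geom_sum_eq hzne, norm_div]
      rw [div_le_div_iff₀ (by positivity) habs1]
      have : ‖z ^ (q-p).toNat - 1‖ ≤ 2 := by
        have h := norm_sub_le (z ^ (q-p).toNat) (1:ℂ)
        calc ‖z ^ (q-p).toNat - 1‖ ≤ ‖z^(q-p).toNat‖ + ‖1‖ := h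
          _ ≤ 2 := by rw [norm_pow, habsz]; norm_num
      nlinarith
  calc ‖∑ m ∈ Finset.Ioc p q, e (-((j:ℝ) * m) / N)‖
      = ‖∑ m ∈ Finset.Ioc p q, z ^ m‖ := by
        congr 1; exact Finset.sum_congr rfl fun m _ => hterm m
    _ ≤ 2 / ‖z - 1‖ := hsum
    _ ≤ 2 / (2 * (2 * min (j:ℝ) ((N:ℝ)-j) / N)) := by
        apply div_le_div_of_nonneg_left (by norm_num) hlowpos hlow
    _ = (N:ℝ) / (2 * min (j:ℝ) ((N:ℝ)-j)) := by
        rw [div_eq_div_iff hlowpos.ne' (mul_pos two_pos hminpos).ne']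
        field_simp
    _ ≤ (N:ℝ)/(2*j) + (N:ℝ)/(2*((N:ℝ)-j)) := by
        rcases le_or_gt (j:ℝ) ((N:ℝ)-j) with h | h
        · rw [min_eq_left h]
          have : 0 ≤ (N:ℝ)/(2*((N:ℝ)-j)) := div_nonneg hN.le (by nlinarith)
          linarith
        · rw [min_eq_right h.le]
          have : 0 ≤ (N:ℝ)/(2*j) := div_nonneg hN.le (by nlinarith)
          linarith

lemma harm_bound (N : ℕ) (hN : 0 < N) :
    ∑ j ∈ Finset.Ico 1 N, ((j:ℝ))⁻¹ ≤ 1 + Real.log N := by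
  by_cases hN1 : N = 1
  · subst hN1
    simp
  have hN2 : 2 ≤ N := by omega
  have h1 : Finset.Ico 1 N = Finset.Icc 1 (N-1) := by
    rw [← Finset.Ico_add_one_right_eq_Icc]
    congr 1
    omega
  have h2 : ∑ j ∈ Finset.Ico 1 N, ((j:ℝ))⁻¹ = (harmonic (N-1) : ℝ) := by
    rw [h1, harmonic_eq_sum_Icc]
    push_cast
    rfl
  rw [h2]
  calc (harmonic (N-1) : ℝ) ≤ 1 + Real.log (N-1 : ℕ) := harmonic_le_one_add_log _
    _ ≤ 1 + Real.log N := by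
        have h3 : (1:ℝ) ≤ ((N-1 : ℕ):ℝ) := by
          have : 1 ≤ N - 1 := by omega
          exact_mod_cast this
        have h4 : ((N-1:ℕ):ℝ) ≤ (N:ℝ) := by
          have : N - 1 ≤ N := by omega
          exact_mod_cast this
        have := Real.log_le_log (by linarith) h4
        linarith

lemma refl_sum (N : ℕ) :
    ∑ j ∈ Finset.Ico 1 N, (2*((N:ℝ)-(j:ℝ)))⁻¹ = ∑ j ∈ Finset.Ico 1 N, (2*(j:ℝ))⁻¹ := by
  apply Finset.sum_nbij' (i := fun j => N - j) (j := fun j => N - j)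
  · intro a ha
    simp only [Finset.mem_Ico] at *
    omega
  · intro a ha
    simp only [Finset.mem_Ico] at *
    omega
  · intro a ha
    simp only [Finset.mem_Ico] at ha
    omega
  · intro a ha
    simp only [Finset.mem_Ico] at ha
    omega
  · intro a ha
    simp only [Finset.mem_Ico] at ha
    congr 2
    have : ((N - a : ℕ) : ℝ) = (N:ℝ) - a := by
      have : a ≤ N := by omega
      push_cast [this]
      ring
    rw [this]

lemma avg_bound (N : ℕ) (hN : 0 < N) (p q : ℤ) (hcard : q - p ≤ (N:ℤ)) :
    (N:ℝ)⁻¹ * ∑ j ∈ Finset.range N,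
        ‖∑ m ∈ Finset.Ioc p q, e (-((j:ℝ) * m) / N)‖ ≤ 2 + Real.log N := by
  have hNR : (0:ℝ) < N := by exact_mod_cast hN
  have hlogN : 0 ≤ Real.log N := Real.log_nonneg (by exact_mod_cast hN)
  have hzero : ‖∑ m ∈ Finset.Ioc p q, e (-(((0:ℕ):ℝ) * m) / N)‖ ≤ N := by
    have h1 : ∀ m ∈ Finset.Ioc p q, e (-(((0:ℕ):ℝ) * m) / N) = 1 := by
      intro m _
      rw [show -(((0:ℕ):ℝ) * m) / N = ((0:ℤ):ℝ) by push_cast; ring]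
      exact e_int 0
    rw [Finset.sum_congr rfl h1, Finset.sum_const, nsmul_eq_mul, mul_one]
    rw [Complex.norm_natCast]
    have : (Finset.Ioc p q).card ≤ N := by
      rw [Int.card_Ioc]
      omega
    exact_mod_cast this
  rw [Finset.range_eq_Ico, Finset.sum_eq_sum_Ico_succ_bot hN]
  have hbig : ∑ j ∈ Finset.Ico 1 N, ‖∑ m ∈ Finset.Ioc p q, e (-((j:ℝ) * m) / N)‖
      ≤ (N:ℝ) * (1 + Real.log N) := by
    calc ∑ j ∈ Finset.Ico 1 N, ‖∑ m ∈ Finset.Ioc p q, e (-((j:ℝ) * m) / N)‖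
        ≤ ∑ j ∈ Finset.Ico 1 N, ((N:ℝ) * ((2*(j:ℝ))⁻¹ + (2*((N:ℝ)-(j:ℝ)))⁻¹)) := by
          apply Finset.sum_le_sum
          intro j hj
          simp only [Finset.mem_Ico] at hj
          have := g_bound N j hj.1 hj.2 p q
          calc ‖∑ m ∈ Finset.Ioc p q, e (-((j:ℝ) * m) / N)‖
              ≤ (N:ℝ)/(2*j) + (N:ℝ)/(2*((N:ℝ)-j)) := this
            _ = (N:ℝ) * ((2*(j:ℝ))⁻¹ + (2*((N:ℝ)-(j:ℝ)))⁻¹) := by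
                rw [mul_add, div_eq_mul_inv, div_eq_mul_inv]
      _ = (N:ℝ) * (∑ j ∈ Finset.Ico 1 N, (2*(j:ℝ))⁻¹
            + ∑ j ∈ Finset.Ico 1 N, (2*((N:ℝ)-(j:ℝ)))⁻¹) := by
          rw [← Finset.mul_sum, Finset.sum_add_distrib]
      _ = (N:ℝ) * (2 * ∑ j ∈ Finset.Ico 1 N, (2*(j:ℝ))⁻¹) := by
          rw [refl_sum]; ring
      _ ≤ (N:ℝ) * (1 + Real.log N) := by
          apply mul_le_mul_of_nonneg_left _ hNR.le
          have : ∑ j ∈ Finset.Ico 1 N, (2*(j:ℝ))⁻¹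
              = 2⁻¹ * ∑ j ∈ Finset.Ico 1 N, ((j:ℝ))⁻¹ := by
            rw [Finset.mul_sum]
            apply Finset.sum_congr rfl
            intro j _
            rw [mul_inv]
          rw [this]
          have := harm_bound N hN
          linarith
  have h0 : ‖∑ m ∈ Finset.Ioc p q, e (-(((0:ℕ):ℝ) * m) / N)‖ ≤ N := hzero
  rw [inv_mul_le_iff₀ hNR]
  calc ‖∑ m ∈ Finset.Ioc p q, e (-(((0:ℕ):ℝ) * m) / N)‖
        + ∑ j ∈ Finset.Ico (0+1) N, ‖∑ m ∈ Finset.Ioc p q, e (-((j:ℝ) * m) / N)‖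
      ≤ (N:ℝ) + (N:ℝ) * (1 + Real.log N) := by
        apply add_le_add h0
        simpa using hbig
    _ = (2 + Real.log N) * N := by ring
    _ ≤ (N:ℝ) * (2 + Real.log N) := by rw [mul_comm]

lemma coord (Lp Mp pp qp : ℤ) (N : ℕ) (hNLM : (N:ℤ) = Mp - Lp)
    (h1 : Lp ≤ pp) (h2 : qp ≤ Mp) (x : ℤ) (hx : x ∈ Finset.Ioc Lp Mp) :
    (if x ∈ Finset.Ioc pp qp then (1:ℂ) else 0)
      = (N:ℂ)⁻¹ * ∑ j ∈ Finset.range N,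
          e ((j:ℝ) * x / N) * ∑ m ∈ Finset.Ioc pp qp, e (-((j:ℝ) * m) / N) := by
  have hN0 : 0 < N := by
    simp only [Finset.mem_Ioc] at hx
    omega
  have hNR : (0:ℝ) < N := by exact_mod_cast hN0
  have step1 : ∀ j : ℕ, e ((j:ℝ) * x / N) * ∑ m ∈ Finset.Ioc pp qp, e (-((j:ℝ) * m) / N)
      = ∑ m ∈ Finset.Ioc pp qp, e ((j:ℝ) * (((x - m : ℤ):ℝ) / N)) := by
    intro j
    rw [Finset.mul_sum]
    apply Finset.sum_congr rfl
    intro m _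
    rw [← e_add]
    congr 1
    push_cast
    field_simp
    ring
  calc (if x ∈ Finset.Ioc pp qp then (1:ℂ) else 0)
      = (N:ℂ)⁻¹ * (if x ∈ Finset.Ioc pp qp then (N:ℂ) else 0) := by
        have hNne : (N:ℂ) ≠ 0 := by exact_mod_cast hNR.ne'
        split
        · rw [inv_mul_cancel₀ hNne]
        · rw [mul_zero]
    _ = (N:ℂ)⁻¹ * ∑ m ∈ Finset.Ioc pp qp, (if (N:ℤ) ∣ (x - m) then (N:ℂ) else 0) := by
        congr 1
        have hdvd : ∀ m ∈ Finset.Ioc pp qp, ((N:ℤ) ∣ (x - m)) ↔ x = m := by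
          intro m hm
          simp only [Finset.mem_Ioc] at hx hm
          constructor
          · intro hd
            have habs : |x - m| < (N:ℤ) := by
              rw [abs_lt]
              omega
            have := Int.eq_zero_of_abs_lt_dvd hd habs
            omega
          · rintro rfl
            simp
        calc (if x ∈ Finset.Ioc pp qp then (N:ℂ) else 0)
            = ∑ m ∈ Finset.Ioc pp qp, (if x = m then (N:ℂ) else 0) := by
              rw [Finset.sum_ite_eq]
          _ = _ := by
              apply Finset.sum_congr rfl
              intro m hm
              rw [if_congr (hdvd m hm).symm rfl rfl]
    _ = (N:ℂ)⁻¹ * ∑ m ∈ Finset.Ioc pp qp, ∑ j ∈ Finset.range N,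
          e ((j:ℝ) * (((x - m : ℤ):ℝ) / N)) := by
        congr 1
        apply Finset.sum_congr rfl
        intro m _
        rw [geom_ortho N hN0]
    _ = _ := by
        rw [Finset.sum_comm]
        congr 1
        apply Finset.sum_congr rfl
        intro j _
        rw [step1]

lemma e_sum {k : ℕ} (x : Fin k → ℝ) : e (∑ i, x i) = ∏ i, e (x i) := by
  simp only [e]
  rw [← Complex.exp_sum]
  congr 1
  push_cast
  rw [Finset.mul_sum]

lemma main_identity (k : ℕ) (L M p q : Fin k → ℤ) (N : Fin k → ℕ)
    (hN : ∀ i, (N i : ℤ) = M i - L i) (hLp : ∀ i, L i ≤ p i) (hqM : ∀ i, q i ≤ M i)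
    (a : (Fin k → ℤ) → ℂ) :
    ∑ n ∈ Fintype.piFinset (fun i => Finset.Ioc (p i) (q i)), a n
      = ∑ j ∈ Fintype.piFinset (fun i => Finset.range (N i)),
          (∏ i, ((N i:ℂ)⁻¹ * ∑ m ∈ Finset.Ioc (p i) (q i), e (-((j i:ℝ) * m) / N i))) *
          ∑ n ∈ Fintype.piFinset (fun i => Finset.Ioc (L i) (M i)),
            a n * e (∑ i, ((j i : ℝ) / N i) * (n i : ℝ)) := by
  classical
  have hJsub : Fintype.piFinset (fun i => Finset.Ioc (p i) (q i)) ⊆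
      Fintype.piFinset (fun i => Finset.Ioc (L i) (M i)) := by
    intro n hn
    rw [Fintype.mem_piFinset] at *
    intro i
    have := hn i
    simp only [Finset.mem_Ioc] at *
    exact ⟨lt_of_le_of_lt (hLp i) this.1, le_trans this.2 (hqM i)⟩
  -- Step A
  have stepA : ∑ n ∈ Fintype.piFinset (fun i => Finset.Ioc (p i) (q i)), a n
      = ∑ n ∈ Fintype.piFinset (fun i => Finset.Ioc (L i) (M i)),
          a n * ∏ i, (if n i ∈ Finset.Ioc (p i) (q i) then (1:ℂ) else 0) := by
    have h1 : ∀ n, (∏ i, (if n i ∈ Finset.Ioc (p i) (q i) then (1:ℂ) else 0))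
        = if n ∈ Fintype.piFinset (fun i => Finset.Ioc (p i) (q i)) then (1:ℂ) else 0 := by
      intro n
      rw [Finset.prod_boole]
      congr 1
      simp [Fintype.mem_piFinset]
    simp only [h1, mul_ite, mul_one, mul_zero]
    rw [Finset.sum_ite_mem, Finset.inter_eq_right.mpr hJsub]
  rw [stepA]
  -- Step B: rewrite each summand
  have stepB : ∀ n ∈ Fintype.piFinset (fun i => Finset.Ioc (L i) (M i)),
      a n * ∏ i, (if n i ∈ Finset.Ioc (p i) (q i) then (1:ℂ) else 0)
      = ∑ j ∈ Fintype.piFinset (fun i => Finset.range (N i)),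
          (∏ i, ((N i:ℂ)⁻¹ * ∑ m ∈ Finset.Ioc (p i) (q i), e (-((j i:ℝ) * m) / N i))) *
          (a n * e (∑ i, ((j i : ℝ) / N i) * (n i : ℝ))) := by
    intro n hn
    rw [Fintype.mem_piFinset] at hn
    have hprod : (∏ i, (if n i ∈ Finset.Ioc (p i) (q i) then (1:ℂ) else 0))
        = ∑ j ∈ Fintype.piFinset (fun i => Finset.range (N i)),
            ∏ i, ((N i:ℂ)⁻¹ * (e ((j i:ℝ) * (n i) / N i) *
              ∑ m ∈ Finset.Ioc (p i) (q i), e (-((j i:ℝ) * m) / N i))) := by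
      have hc : (∏ i, (if n i ∈ Finset.Ioc (p i) (q i) then (1:ℂ) else 0))
          = ∏ i, ∑ ji ∈ Finset.range (N i), ((N i:ℂ)⁻¹ * (e ((ji:ℝ) * (n i) / N i) *
              ∑ m ∈ Finset.Ioc (p i) (q i), e (-((ji:ℝ) * m) / N i))) := by
        apply Finset.prod_congr rfl
        intro i _
        rw [coord (L i) (M i) (p i) (q i) (N i) (hN i) (hLp i) (hqM i) (n i) (hn i)]
        rw [Finset.mul_sum]
      rw [hc, Finset.prod_univ_sum]
    rw [hprod, Finset.mul_sum]
    apply Finset.sum_congr rfl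
    intro j _
    have hsplit : ∏ i, ((N i:ℂ)⁻¹ * (e ((j i:ℝ) * (n i) / N i) *
        ∑ m ∈ Finset.Ioc (p i) (q i), e (-((j i:ℝ) * m) / N i)))
        = (∏ i, ((N i:ℂ)⁻¹ * ∑ m ∈ Finset.Ioc (p i) (q i), e (-((j i:ℝ) * m) / N i))) *
          ∏ i, e ((j i:ℝ) * (n i) / N i) := by
      rw [← Finset.prod_mul_distrib]
      apply Finset.prod_congr rfl
      intro i _
      ring
    have heprod : (∏ i, e ((j i:ℝ) * (n i) / N i)) = e (∑ i, ((j i : ℝ) / N i) * (n i : ℝ)) := by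
      rw [e_sum]
      apply Finset.prod_congr rfl
      intro i _
      congr 1
      ring
    rw [hsplit, heprod]
    ring
  rw [Finset.sum_congr rfl stepB, Finset.sum_comm]
  apply Finset.sum_congr rfl
  intro j _
  rw [← Finset.mul_sum]
theorem stmt_9 (k : ℕ) (hk : 0 < k) :
    ∃ Ck : ℝ, 0 < Ck ∧
      ∀ (A B : Fin k → ℝ), (∀ i, 0 < B i) →
      ∀ (a : (Fin k → ℤ) → ℂ),
        (∀ n : Fin k → ℤ, (¬ ∀ i, A i < (n i : ℝ) ∧ (n i : ℝ) ≤ A i + B i) → a n = 0) →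
      ∀ (c D : Fin k → ℝ), (∀ i, 0 < D i) →
        (∀ i, A i ≤ c i ∧ c i + D i ≤ A i + B i) →
        ‖∑ n ∈ Fintype.piFinset (fun i => Finset.Ioc ⌊c i⌋ ⌊c i + D i⌋), a n‖ ≤
          Ck * (∏ i, Real.log (B i + 2)) *
            sSup {t : ℝ | ∃ θ : Fin k → ℝ,
              t = ‖∑ n ∈ Fintype.piFinset (fun i => Finset.Ioc ⌊A i⌋ ⌊A i + B i⌋),
                a n * e (∑ i, θ i * (n i : ℝ))‖} := by
  refine ⟨4^k, by positivity, ?_⟩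
  intro A B hB a ha c D hD hsub
  classical
  set Tset := {t : ℝ | ∃ θ : Fin k → ℝ,
    t = ‖∑ n ∈ Fintype.piFinset (fun i => Finset.Ioc ⌊A i⌋ ⌊A i + B i⌋),
      a n * e (∑ i, θ i * (n i : ℝ))‖} with hTset
  have hbdd : BddAbove Tset := by
    refine ⟨∑ n ∈ Fintype.piFinset (fun i => Finset.Ioc ⌊A i⌋ ⌊A i + B i⌋),
      ‖a n‖, ?_⟩
    rintro t ⟨θ, rfl⟩
    calc ‖∑ n ∈ Fintype.piFinset (fun i => Finset.Ioc ⌊A i⌋ ⌊A i + B i⌋),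
          a n * e (∑ i, θ i * (n i : ℝ))‖
        ≤ ∑ n ∈ Fintype.piFinset (fun i => Finset.Ioc ⌊A i⌋ ⌊A i + B i⌋),
          ‖a n * e (∑ i, θ i * (n i : ℝ))‖ := norm_sum_le _ _
      _ = ∑ n ∈ Fintype.piFinset (fun i => Finset.Ioc ⌊A i⌋ ⌊A i + B i⌋),
          ‖a n‖ := by
          apply Finset.sum_congr rfl
          intro n _
          rw [norm_mul, abs_e, mul_one]
  have hS : ∀ θ : Fin k → ℝ,
      ‖∑ n ∈ Fintype.piFinset (fun i => Finset.Ioc ⌊A i⌋ ⌊A i + B i⌋),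
        a n * e (∑ i, θ i * (n i : ℝ))‖ ≤ sSup Tset := by
    intro θ
    exact le_csSup hbdd ⟨θ, rfl⟩
  have hS0 : 0 ≤ sSup Tset :=
    le_trans (norm_nonneg _) (hS 0)
  have hlogpos : ∀ i, 0 < Real.log (B i + 2) := by
    intro i
    apply Real.log_pos
    linarith [hB i]
  by_cases hall : ∀ i, ⌊A i⌋ < ⌊A i + B i⌋
  swap
  · -- degenerate case : some coordinate has no integer points
    push_neg at hall
    obtain ⟨i0, hi0⟩ := hall
    have hempty : Fintype.piFinset (fun i => Finset.Ioc ⌊c i⌋ ⌊c i + D i⌋) = ∅ := by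
      apply Finset.eq_empty_of_forall_notMem
      intro n hn
      rw [Fintype.mem_piFinset] at hn
      have h1 := hn i0
      have h2 : ⌊A i0⌋ ≤ ⌊c i0⌋ := Int.floor_le_floor (hsub i0).1
      have h3 : ⌊c i0 + D i0⌋ ≤ ⌊A i0 + B i0⌋ := Int.floor_le_floor (hsub i0).2
      simp only [Finset.mem_Ioc] at h1
      omega
    rw [hempty, Finset.sum_empty, norm_zero]
    have : (0:ℝ) < ∏ i, Real.log (B i + 2) := Finset.prod_pos (fun i _ => hlogpos i)
    positivity
  -- main case
  set L : Fin k → ℤ := fun i => ⌊A i⌋ with hL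
  set M : Fin k → ℤ := fun i => ⌊A i + B i⌋ with hM
  set p : Fin k → ℤ := fun i => ⌊c i⌋ with hp
  set q : Fin k → ℤ := fun i => ⌊c i + D i⌋ with hq
  set N : Fin k → ℕ := fun i => (M i - L i).toNat with hNdef
  have hN : ∀ i, (N i : ℤ) = M i - L i := by
    intro i
    simp only [hNdef]
    refine Int.toNat_of_nonneg ?_
    have h := hall i
    simp only [hM, hL]
    omega
  have hN1 : ∀ i, 0 < N i := by
    intro i
    have h := hall i
    have h2 := hN i
    simp only [hM, hL] at h2
    omega
  have hLp : ∀ i, L i ≤ p i := fun i => Int.floor_le_floor (hsub i).1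
  have hqM : ∀ i, q i ≤ M i := fun i => Int.floor_le_floor (hsub i).2
  rw [main_identity k L M p q N hN hLp hqM a]
  -- bound the absolute value
  have habs : ‖∑ j ∈ Fintype.piFinset (fun i => Finset.range (N i)),
        (∏ i, ((N i:ℂ)⁻¹ * ∑ m ∈ Finset.Ioc (p i) (q i), e (-((j i:ℝ) * m) / N i))) *
        ∑ n ∈ Fintype.piFinset (fun i => Finset.Ioc (L i) (M i)),
          a n * e (∑ i, ((j i : ℝ) / N i) * (n i : ℝ))‖
      ≤ (∏ i, ((N i:ℝ)⁻¹ * ∑ ji ∈ Finset.range (N i),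
          ‖∑ m ∈ Finset.Ioc (p i) (q i), e (-((ji:ℝ) * m) / N i)‖)) * sSup Tset := by
    calc ‖∑ j ∈ Fintype.piFinset (fun i => Finset.range (N i)),
          (∏ i, ((N i:ℂ)⁻¹ * ∑ m ∈ Finset.Ioc (p i) (q i), e (-((j i:ℝ) * m) / N i))) *
          ∑ n ∈ Fintype.piFinset (fun i => Finset.Ioc (L i) (M i)),
            a n * e (∑ i, ((j i : ℝ) / N i) * (n i : ℝ))‖
        ≤ ∑ j ∈ Fintype.piFinset (fun i => Finset.range (N i)),
            ‖(∏ i, ((N i:ℂ)⁻¹ * ∑ m ∈ Finset.Ioc (p i) (q i), e (-((j i:ℝ) * m) / N i))) *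
            ∑ n ∈ Fintype.piFinset (fun i => Finset.Ioc (L i) (M i)),
              a n * e (∑ i, ((j i : ℝ) / N i) * (n i : ℝ))‖ := norm_sum_le _ _
      _ ≤ ∑ j ∈ Fintype.piFinset (fun i => Finset.range (N i)),
            (∏ i, ((N i:ℝ)⁻¹ *
              ‖∑ m ∈ Finset.Ioc (p i) (q i), e (-((j i:ℝ) * m) / N i)‖)) * sSup Tset := by
            apply Finset.sum_le_sum
            intro j _
            rw [norm_mul, norm_prod]
            have hfac : ∀ i ∈ Finset.univ,
                ‖(N i:ℂ)⁻¹ * ∑ m ∈ Finset.Ioc (p i) (q i), e (-((j i:ℝ) * m) / N i)‖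
                = (N i:ℝ)⁻¹ * ‖∑ m ∈ Finset.Ioc (p i) (q i), e (-((j i:ℝ) * m) / N i)‖ := by
              intro i _
              rw [norm_mul, norm_inv, Complex.norm_natCast]
            rw [Finset.prod_congr rfl hfac]
            apply mul_le_mul_of_nonneg_left (hS _)
            apply Finset.prod_nonneg
            intro i _
            positivity
      _ = (∏ i, ∑ ji ∈ Finset.range (N i), ((N i:ℝ)⁻¹ *
            ‖∑ m ∈ Finset.Ioc (p i) (q i), e (-((ji:ℝ) * m) / N i)‖)) * sSup Tset := by
            rw [← Finset.sum_mul, Finset.prod_univ_sum]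
      _ = _ := by
            congr 1
            apply Finset.prod_congr rfl
            intro i _
            rw [Finset.mul_sum]
  refine le_trans habs ?_
  -- now bound the product
  have hkey : ∀ i, (N i:ℝ)⁻¹ * ∑ ji ∈ Finset.range (N i),
      ‖∑ m ∈ Finset.Ioc (p i) (q i), e (-((ji:ℝ) * m) / N i)‖
      ≤ 4 * Real.log (B i + 2) := by
    intro i
    have hcard : q i - p i ≤ (N i : ℤ) := by
      have := hN i
      have := hLp i
      have := hqM i
      omega
    have h1 := avg_bound (N i) (hN1 i) (p i) (q i) hcard
    have hNB : (N i : ℝ) ≤ B i + 2 := by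
      have h2 : ((M i : ℤ) : ℝ) ≤ A i + B i := Int.floor_le _
      have h3 : A i - 1 < ((L i : ℤ) : ℝ) := by
        have := Int.sub_one_lt_floor (A i)
        exact_mod_cast this
      have h4 : ((N i : ℤ) : ℝ) = (M i : ℝ) - (L i : ℝ) := by
        rw [hN i]; push_cast; ring
      have : ((N i : ℤ) : ℝ) < B i + 1 := by
        rw [h4]; linarith
      have h5 : ((N i : ℤ) : ℝ) = (N i : ℝ) := by push_cast; ring
      linarith [h5 ▸ this]
    have hN1R : (1:ℝ) ≤ N i := by exact_mod_cast hN1 i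
    have hlogN : Real.log (N i) ≤ Real.log (B i + 2) :=
      Real.log_le_log (by linarith) hNB
    have hlog2 : Real.log 2 ≤ Real.log (B i + 2) :=
      Real.log_le_log two_pos (by linarith [hB i])
    have h2log2 : (0.6931471803 : ℝ) < Real.log 2 := Real.log_two_gt_d9
    linarith
  calc (∏ i, ((N i:ℝ)⁻¹ * ∑ ji ∈ Finset.range (N i),
        ‖∑ m ∈ Finset.Ioc (p i) (q i), e (-((ji:ℝ) * m) / N i)‖)) * sSup Tset
      ≤ (∏ i, (4 * Real.log (B i + 2))) * sSup Tset := by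
        apply mul_le_mul_of_nonneg_right _ hS0
        apply Finset.prod_le_prod
        · intro i _
          apply mul_nonneg (by positivity)
          apply Finset.sum_nonneg
          intro ji _
          exact norm_nonneg _
        · intro i _
          exact hkey i
    _ = 4^k * (∏ i, Real.log (B i + 2)) * sSup Tset := by
        rw [Finset.prod_mul_distrib, Finset.prod_const]
        simp [Finset.card_univ]
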